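/- arXiv:0810.1465 — 3 statements merged into one kernel-verified Lean document; each statement's English description precedes it below -/
import Mathlib

section
/- For any A ∈ GL_2(Q) with det(A) > 0, we have Pdet(A) = Pdet(A^{-1}), where Pdet(X) = α_X^2 det(X) and α_X is the smallest positive rational such that α_X·X has integer entries. Moreover, if α_A is the minimal positive rational for which α_A A ∈ M_2(Z), then the minimal positive rational α_{A^{-1}} for A^{-1} equals det(A)·α_A. -/
/-- `α` is the smallest positive rational such that `α • A` has integer entries. -/
def IsMinScal (A : Matrix (Fin 2) (Fin 2) ℚ) (α : ℚ) : Prop :=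
  0 < α ∧ (∀ i j, ∃ z : ℤ, α * A i j = (z : ℚ)) ∧
    ∀ β : ℚ, 0 < β → (∀ i j, ∃ z : ℤ, β * A i j = (z : ℚ)) → α ≤ β

lemma aux_inv_int (B : Matrix (Fin 2) (Fin 2) ℚ) (hd : B.det ≠ 0) (γ : ℚ)
    (hγ : ∀ i j, ∃ z : ℤ, γ * B i j = (z : ℚ)) :
    ∀ i j, ∃ z : ℤ, (B.det * γ) * B⁻¹ i j = (z : ℚ) := by
  have hinv : B⁻¹ = B.det⁻¹ • B.adjugate := by
    rw [Matrix.inv_def, Ring.inverse_eq_inv']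
  have key : ∀ i j, (B.det * γ) * B⁻¹ i j = γ * B.adjugate i j := by
    intro i j
    rw [hinv]
    simp [Matrix.smul_apply]
    field_simp
  intro i j
  rw [key]
  have hadj := Matrix.adjugate_fin_two B
  fin_cases i <;> fin_cases j <;> simp [hadj]
  · exact hγ 1 1
  · obtain ⟨z, hz⟩ := hγ 0 1
    exact ⟨-z, by push_cast; linarith⟩
  · obtain ⟨z, hz⟩ := hγ 1 0
    exact ⟨-z, by push_cast; linarith⟩
  · exact hγ 0 0

/-- For `A ∈ GL_2^+(ℚ)`, if `α` is the minimal positive rational with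
`α • A ∈ M_2(ℤ)`, then the minimal positive rational for `A⁻¹` is `det(A) · α`, and
`Pdet(A) = Pdet(A⁻¹)`, i.e. `α² · det A = (det A · α)² · det (A⁻¹)`. -/
theorem stmt7 (A : Matrix (Fin 2) (Fin 2) ℚ) (hdet : 0 < A.det)
    (α : ℚ) (hα : IsMinScal A α) :
    IsMinScal A⁻¹ (A.det * α) ∧ α ^ 2 * A.det = (A.det * α) ^ 2 * A⁻¹.det := by
  obtain ⟨hpos, hint, hmin⟩ := hα
  have hd : A.det ≠ 0 := ne_of_gt hdet
  have hu : IsUnit A.det := isUnit_iff_ne_zero.mpr hd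
  have hdinv : A⁻¹.det = A.det⁻¹ := by
    rw [Matrix.det_nonsing_inv, Ring.inverse_eq_inv']
  have hinvinv : A⁻¹⁻¹ = A := Matrix.nonsing_inv_nonsing_inv A hu
  constructor
  · refine ⟨by positivity, aux_inv_int A hd α hint, ?_⟩
    intro β hβ hβint
    have hd' : A⁻¹.det ≠ 0 := by rw [hdinv]; exact inv_ne_zero hd
    have := aux_inv_int A⁻¹ hd' β hβint
    rw [hinvinv, hdinv] at this
    have h2 := hmin _ (by positivity) this
    calc A.det * α ≤ A.det * (A.det⁻¹ * β) := by
          exact mul_le_mul_of_nonneg_left h2 (le_of_lt hdet)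
      _ = β := by field_simp
  · rw [hdinv]; field_simp
end

section
/- Let H be a subgroup of PSL_2(R) commensurable with PSL_2(Z). Then every element of H fixing ∞ in the boundary action on P^1(R) is of the form [[1, b],[0,1]] with b ∈ Q; i.e., the stabilizer of ∞ in H consists only of rational translations. -/
open OnePoint

noncomputable section

abbrev SL2R := Matrix.SpecialLinearGroup (Fin 2) ℝ

abbrev PSL2R := SL2R ⧸ Subgroup.center SL2R

/-- The Möbius action of an `SL_2(ℝ)` matrix on `P¹(ℝ) = ℝ ∪ {∞}`. -/
def moeb (A : SL2R) : OnePoint ℝ → OnePoint ℝ := fun x =>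
  Option.elim (x : Option ℝ)
    (if (A : Matrix (Fin 2) (Fin 2) ℝ) 1 0 = 0 then (∞ : OnePoint ℝ)
      else (((A : Matrix (Fin 2) (Fin 2) ℝ) 0 0 / (A : Matrix (Fin 2) (Fin 2) ℝ) 1 0 : ℝ) :
        OnePoint ℝ))
    (fun t =>
      if (A : Matrix (Fin 2) (Fin 2) ℝ) 1 0 * t + (A : Matrix (Fin 2) (Fin 2) ℝ) 1 1 = 0 then
        (∞ : OnePoint ℝ)
      else ((((A : Matrix (Fin 2) (Fin 2) ℝ) 0 0 * t + (A : Matrix (Fin 2) (Fin 2) ℝ) 0 1) /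
        ((A : Matrix (Fin 2) (Fin 2) ℝ) 1 0 * t + (A : Matrix (Fin 2) (Fin 2) ℝ) 1 1) : ℝ) :
          OnePoint ℝ))

/-- An element of `PSL_2(ℝ)` fixes a point of `P¹(ℝ)` if every matrix representing it does. -/
def PSLFixes (x : PSL2R) (p : OnePoint ℝ) : Prop :=
  ∀ A : SL2R, (QuotientGroup.mk A : PSL2R) = x → moeb A p = p

/-- An element of `PSL_2(ℝ)` is parabolic if it is not the identity and fixes a unique
point of `P¹(ℝ)`. -/
def IsParabolicPSL (x : PSL2R) : Prop := x ≠ 1 ∧ ∃! p : OnePoint ℝ, PSLFixes x p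

/-- `C(K)`: the set of points of `P¹(ℝ)` fixed by some parabolic element of `K`. -/
def parabPoints (K : Subgroup PSL2R) : Set (OnePoint ℝ) :=
  {p | ∃ x ∈ K, IsParabolicPSL x ∧ PSLFixes x p}

/-- `PSL_2(ℤ)` as a subgroup of `PSL_2(ℝ)`. -/
def PSL2Z : Subgroup PSL2R :=
  ((QuotientGroup.mk' (Subgroup.center SL2R)).comp
    (Matrix.SpecialLinearGroup.map (Int.castRingHom ℝ))).range

/-- The translation matrix `[[1, b], [0, 1]]` as an element of `SL_2(ℝ)`. -/
def Tmat (b : ℝ) : SL2R :=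
  ⟨!![1, b; 0, 1], by simp [Matrix.det_fin_two_of]⟩

end

private lemma upper_pow (a b d : ℝ) (n : ℕ) :
    ∃ t : ℝ, (!![a, b; 0, d] : Matrix (Fin 2) (Fin 2) ℝ) ^ n = !![a ^ n, t; 0, d ^ n] := by
  induction n with
  | zero => exact ⟨0, by simp [Matrix.one_fin_two]⟩
  | succ n ih =>
    obtain ⟨t, ht⟩ := ih
    refine ⟨a ^ n * b + t * d, ?_⟩
    rw [pow_succ, ht, Matrix.mul_fin_two]
    congr 1 <;> ring

private lemma trans_pow (b : ℝ) (n : ℕ) :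
    (!![1, b; 0, 1] : Matrix (Fin 2) (Fin 2) ℝ) ^ n = !![1, n * b; 0, 1] := by
  induction n with
  | zero => simp [Matrix.one_fin_two]
  | succ n ih =>
    rw [pow_succ, ih, Matrix.mul_fin_two]
    congr 1 <;> push_cast <;> ring

private lemma key (A : SL2R) (ha : 0 < (A : Matrix (Fin 2) (Fin 2) ℝ) 0 0)
    (hc : (A : Matrix (Fin 2) (Fin 2) ℝ) 1 0 = 0) (n : ℕ) (hn : 0 < n)
    (hmem : (QuotientGroup.mk A : PSL2R) ^ n ∈ PSL2Z) :
    ∃ b : ℚ, (QuotientGroup.mk A : PSL2R) = QuotientGroup.mk (Tmat (b : ℝ)) := by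
  set a := (A : Matrix (Fin 2) (Fin 2) ℝ) 0 0 with haa
  set b := (A : Matrix (Fin 2) (Fin 2) ℝ) 0 1 with hbb
  set d := (A : Matrix (Fin 2) (Fin 2) ℝ) 1 1 with hdd
  have hdet : a * d = 1 := by
    have h2 := A.2
    rw [Matrix.det_fin_two] at h2
    rw [hc] at h2; linarith [h2]
  have hAmat : (A : Matrix (Fin 2) (Fin 2) ℝ) = !![a, b; 0, d] := by
    rw [Matrix.eta_fin_two (A : Matrix (Fin 2) (Fin 2) ℝ), hc]
  have hpow : (QuotientGroup.mk A : PSL2R) ^ n = QuotientGroup.mk (A ^ n) :=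
    (map_pow (QuotientGroup.mk' (Subgroup.center SL2R)) A n).symm
  rw [hpow] at hmem
  rw [PSL2Z, MonoidHom.mem_range] at hmem
  obtain ⟨B, hB⟩ := hmem
  simp only [MonoidHom.comp_apply, QuotientGroup.mk'_apply] at hB
  set C : SL2R := Matrix.SpecialLinearGroup.map (Int.castRingHom ℝ) B with hC
  rw [QuotientGroup.eq] at hB
  obtain ⟨r, hr2, hscal⟩ := Matrix.SpecialLinearGroup.mem_center_iff.mp hB
  have hAn : ((A ^ n : SL2R) : Matrix (Fin 2) (Fin 2) ℝ)
      = (C : Matrix (Fin 2) (Fin 2) ℝ) * Matrix.scalar (Fin 2) r := by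
    have h1 : (C : Matrix (Fin 2) (Fin 2) ℝ) * Matrix.scalar (Fin 2) r
        = (C : Matrix (Fin 2) (Fin 2) ℝ) * ((C⁻¹ * A ^ n : SL2R) : Matrix (Fin 2) (Fin 2) ℝ) := by
      rw [hscal]
    rw [← Matrix.SpecialLinearGroup.coe_mul, mul_inv_cancel_left] at h1
    exact h1.symm
  have hent : ∀ i j, ((A ^ n : SL2R) : Matrix (Fin 2) (Fin 2) ℝ) i j
      = ((B : Matrix (Fin 2) (Fin 2) ℤ) i j : ℝ) * r := by
    intro i j
    rw [hAn]
    have hs : Matrix.scalar (Fin 2) r = r • (1 : Matrix (Fin 2) (Fin 2) ℝ) := by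
      simp [Matrix.scalar, Matrix.smul_one_eq_diagonal]
    rw [hs, mul_smul_comm, mul_one, Matrix.smul_apply, hC,
      Matrix.SpecialLinearGroup.map_apply_coe]
    simp [Matrix.map_apply, mul_comm]
  have hr : r = 1 ∨ r = -1 := by
    rw [show Fintype.card (Fin 2) = 2 from by simp, sq] at hr2
    exact mul_self_eq_one_iff.mp hr2
  obtain ⟨e, he⟩ : ∃ e : ℤ, ((e : ℝ)) = r := by
    rcases hr with h | h
    · exact ⟨1, by simp [h]⟩
    · exact ⟨-1, by simp [h]⟩
  obtain ⟨t, ht⟩ := upper_pow a b d n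
  have hpowmat : ((A ^ n : SL2R) : Matrix (Fin 2) (Fin 2) ℝ) = !![a ^ n, t; 0, d ^ n] := by
    rw [Matrix.SpecialLinearGroup.coe_pow, hAmat, ht]
  set m : ℤ := (B : Matrix (Fin 2) (Fin 2) ℤ) 0 0 * e with hm
  set k : ℤ := (B : Matrix (Fin 2) (Fin 2) ℤ) 1 1 * e with hk
  have hman : (m : ℝ) = a ^ n := by
    have h00 := hent 0 0
    rw [hpowmat, ← he] at h00
    simp at h00
    push_cast [hm]
    linarith [h00]
  have hkdn : (k : ℝ) = d ^ n := by
    have h11 := hent 1 1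
    rw [hpowmat, ← he] at h11
    simp at h11
    push_cast [hk]
    linarith [h11]
  have hmk : m * k = 1 := by
    have : ((m * k : ℤ) : ℝ) = ((1 : ℤ) : ℝ) := by
      push_cast
      rw [hman, hkdn, ← mul_pow, hdet, one_pow]
    exact_mod_cast this
  have hmpos : 0 < m := by
    have : (0 : ℝ) < (m : ℝ) := by rw [hman]; positivity
    exact_mod_cast this
  have hm1 : m = 1 := by
    rcases Int.isUnit_iff.mp (IsUnit.of_mul_eq_one (a := m) k hmk) with h | h
    · exact h
    · omega
  have ha1 : a = 1 := by
    have han : a ^ n = 1 := by rw [← hman, hm1]; norm_num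
    rcases lt_trichotomy a 1 with h | h | h
    · have := pow_lt_one₀ ha.le h hn.ne'
      rw [han] at this; linarith
    · exact h
    · have := one_lt_pow₀ h hn.ne'
      rw [han] at this; linarith
  have hd1 : d = 1 := by rw [ha1, one_mul] at hdet; exact hdet
  rw [ha1, hd1] at hAmat
  have hb : (n : ℝ) * b = ((B : Matrix (Fin 2) (Fin 2) ℤ) 0 1 : ℝ) * (e : ℝ) := by
    have h01 := hent 0 1
    rw [Matrix.SpecialLinearGroup.coe_pow, hAmat, trans_pow, ← he] at h01
    simpa using h01
  refine ⟨((B : Matrix (Fin 2) (Fin 2) ℤ) 0 1 * e : ℤ) / (n : ℚ), ?_⟩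
  have hbq : ((((B : Matrix (Fin 2) (Fin 2) ℤ) 0 1 * e : ℤ) / (n : ℚ) : ℚ) : ℝ) = b := by
    have hn0 : (n : ℝ) ≠ 0 := by positivity
    push_cast
    field_simp
    linarith [hb]
  rw [hbq]
  congr 1
  apply Subtype.ext
  rw [hAmat]
  rfl

private lemma fix_entry (A : SL2R) (h : moeb A ∞ = ∞) :
    (A : Matrix (Fin 2) (Fin 2) ℝ) 1 0 = 0 := by
  by_contra hc
  simp only [moeb, OnePoint.infty, Option.elim, hc, if_neg] at h
  exact (OnePoint.coe_ne_infty _) h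

/-- If `H ≤ PSL_2(ℝ)` is commensurable with `PSL_2(ℤ)`, then every element of
`H` fixing `∞ ∈ P¹(ℝ)` is of the form `[[1, b], [0, 1]]` with `b ∈ ℚ`. -/
theorem stmt11 (H : Subgroup PSL2R) (hcomm : Subgroup.Commensurable H PSL2Z) :
    ∀ x ∈ H, PSLFixes x (∞ : OnePoint ℝ) →
      ∃ b : ℚ, x = (QuotientGroup.mk (Tmat (b : ℝ)) : PSL2R) := by
  intro x hxH hfix
  obtain ⟨n, hn, -, hmem⟩ :=
    Subgroup.exists_pow_mem_of_relIndex_ne_zero hcomm.2 hxH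
  have hmemZ : x ^ n ∈ PSL2Z := hmem.1
  obtain ⟨A, rfl⟩ := QuotientGroup.mk_surjective x
  have hc : (A : Matrix (Fin 2) (Fin 2) ℝ) 1 0 = 0 := fix_entry A (hfix A rfl)
  have hdet : (A : Matrix (Fin 2) (Fin 2) ℝ) 0 0 * (A : Matrix (Fin 2) (Fin 2) ℝ) 1 1 = 1 := by
    have h2 := A.2
    rw [Matrix.det_fin_two, hc] at h2
    linarith [h2]
  have hane : (A : Matrix (Fin 2) (Fin 2) ℝ) 0 0 ≠ 0 := left_ne_zero_of_mul_eq_one hdet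
  rcases hane.lt_or_gt with hneg | hpos
  · have hdet' : (-(A : Matrix (Fin 2) (Fin 2) ℝ)).det = 1 := by
      rw [Matrix.det_neg, A.2]
      norm_num
    set A' : SL2R := ⟨-(A : Matrix (Fin 2) (Fin 2) ℝ), hdet'⟩ with hA'
    have hAA' : (QuotientGroup.mk A : PSL2R) = QuotientGroup.mk A' := by
      rw [QuotientGroup.eq]
      refine Matrix.SpecialLinearGroup.mem_center_iff.mpr ⟨-1, by norm_num, ?_⟩
      have h1 : ((A⁻¹ * A' : SL2R) : Matrix (Fin 2) (Fin 2) ℝ)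
          = -(1 : Matrix (Fin 2) (Fin 2) ℝ) := by
        rw [Matrix.SpecialLinearGroup.coe_mul]
        show (A⁻¹ : SL2R).1 * (-(A : Matrix (Fin 2) (Fin 2) ℝ)) = _
        rw [mul_neg, ← Matrix.SpecialLinearGroup.coe_mul, inv_mul_cancel,
          Matrix.SpecialLinearGroup.coe_one]
      rw [h1]
      ext i j
      simp [Matrix.scalar_apply, Matrix.one_apply, Matrix.diagonal]
      split <;> simp_all
    have ha' : 0 < (A' : Matrix (Fin 2) (Fin 2) ℝ) 0 0 := by
      show 0 < (-(A : Matrix (Fin 2) (Fin 2) ℝ)) 0 0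
      simpa using hneg
    have hc' : (A' : Matrix (Fin 2) (Fin 2) ℝ) 1 0 = 0 := by
      show (-(A : Matrix (Fin 2) (Fin 2) ℝ)) 1 0 = 0
      simp [hc]
    obtain ⟨q, hq⟩ := key A' ha' hc' n hn (by rw [← hAA']; exact hmemZ)
    exact ⟨q, hAA'.trans hq⟩
  · obtain ⟨q, hq⟩ := key A hpos hc n hn hmemZ
    exact ⟨q, hq⟩
end

section
/- If H ≤ PSL_2(R) is commensurable with PSL_2(Z), then H ≤ PGL_2^+(Q); i.e., every element of H can be represented by a 2×2 rational matrix with positive determinant. -/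
open OnePoint

/-! ### Auxiliary material for the proof of `stmt15`. -/

noncomputable section Stmt15Aux

open Matrix

/-- The subfield of real numbers that are rational. -/
def QF : Subfield ℝ := (Rat.castHom ℝ).fieldRange

lemma ratCast_mem_QF (q : ℚ) : ((q : ℝ)) ∈ QF := ⟨q, rfl⟩

lemma intCast_mem_QF (v : ℤ) : ((v : ℝ)) ∈ QF := ⟨(v : ℚ), map_intCast _ v⟩

lemma natCast_mem_QF (k : ℕ) : ((k : ℝ)) ∈ QF := ⟨(k : ℚ), map_natCast _ k⟩

lemma mem_QF_div_k {X y : ℝ} {k : ℕ} (hk : 0 < k) (h : (k : ℝ) * X = y) (hy : y ∈ QF) :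
    X ∈ QF := by
  have hk' : (k : ℝ) ≠ 0 := by positivity
  have hX : X = y / (k : ℝ) := by field_simp; linear_combination h
  rw [hX]
  exact QF.div_mem hy (natCast_mem_QF k)

/-- Powers of `1 + N` for square-zero `N`. -/
lemma unip_pow {R : Type*} [Ring R] (N : R) (h : N * N = 0) (k : ℕ) :
    (1 + N) ^ k = 1 + k • N := by
  induction k with
  | zero => simp
  | succ n ih =>
    rw [pow_succ, ih, mul_add, mul_one, add_mul, one_mul, smul_mul_assoc, h, smul_zero,
      add_zero, succ_nsmul]
    abel

/-- Two matrices representing the same element of `PSL₂(ℝ)` differ by a sign. -/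
lemma rep_pm {M : SL2R} {W : Matrix.SpecialLinearGroup (Fin 2) ℤ}
    (h : (QuotientGroup.mk M : PSL2R) =
      QuotientGroup.mk (Matrix.SpecialLinearGroup.map (Int.castRingHom ℝ) W)) :
    ∃ r : ℝ, (r = 1 ∨ r = -1) ∧
      (M : Matrix (Fin 2) (Fin 2) ℝ) =
        r • ((W : Matrix (Fin 2) (Fin 2) ℤ).map ((↑) : ℤ → ℝ)) := by
  rw [QuotientGroup.eq] at h
  obtain ⟨r, hr2, hscalar⟩ := Matrix.SpecialLinearGroup.mem_center_iff.mp h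
  have h2 : r ^ 2 = 1 := by simpa using hr2
  have hr' : r = 1 ∨ r = -1 := by
    have h3 : (r - 1) * (r + 1) = 0 := by linear_combination h2
    rcases mul_eq_zero.mp h3 with h4 | h4
    · left; linarith
    · right; linarith
  refine ⟨r, hr', ?_⟩
  set W' := Matrix.SpecialLinearGroup.map (Int.castRingHom ℝ) W with hW'def
  have hmul : M * (M⁻¹ * W') = W' := by group
  have hW1 : (W' : Matrix (Fin 2) (Fin 2) ℝ) = r • (M : Matrix (Fin 2) (Fin 2) ℝ) := by
    calc (W' : Matrix (Fin 2) (Fin 2) ℝ)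
        = (M : Matrix (Fin 2) (Fin 2) ℝ) * ((M⁻¹ * W' : SL2R) : Matrix (Fin 2) (Fin 2) ℝ) := by
          rw [← Matrix.SpecialLinearGroup.coe_mul, hmul]
      _ = (M : Matrix (Fin 2) (Fin 2) ℝ) * (r • 1) := by
          rw [← hscalar, Matrix.scalar_apply]; congr 1
          rw [Matrix.smul_eq_diagonal_mul, Matrix.mul_one]
      _ = r • (M : Matrix (Fin 2) (Fin 2) ℝ) := by
          rw [Matrix.mul_smul, mul_one]
  have hfin : r • (W' : Matrix (Fin 2) (Fin 2) ℝ) = (M : Matrix (Fin 2) (Fin 2) ℝ) := by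
    rw [hW1, smul_smul, ← sq, h2, one_smul]
  rw [← hfin, hW'def]
  simp

/-- Commensurability gives: conjugates of suitable powers of elements of `PSL₂(ℤ)` by
elements of `H` are again in `PSL₂(ℤ)`. -/
lemma conj_pow_mem (H : Subgroup PSL2R) (hcomm : Subgroup.Commensurable H PSL2Z)
    {x u : PSL2R} (hx : x ∈ H) (hu : u ∈ PSL2Z) :
    ∃ k : ℕ, 0 < k ∧ x * u ^ k * x⁻¹ ∈ PSL2Z := by
  obtain ⟨n, hn, -, hmem⟩ := Subgroup.exists_pow_mem_of_relIndex_ne_zero hcomm.1 hu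
  have h1 : x * u ^ n * x⁻¹ ∈ H := H.mul_mem (H.mul_mem hx hmem.1) (H.inv_mem hx)
  obtain ⟨m, hm, -, hmem2⟩ := Subgroup.exists_pow_mem_of_relIndex_ne_zero hcomm.2 h1
  refine ⟨n * m, Nat.mul_pos hn hm, ?_⟩
  have hpow : (x * u ^ n * x⁻¹) ^ m = x * u ^ (n * m) * x⁻¹ := by
    rw [conj_pow, ← pow_mul]
  rw [← hpow]
  exact hmem2.1

/-- Key step: for `B` representing an element of `H` and `W = 1 + N` an integral unipotent,
some positive power of the unipotent is conjugated by `B` into `± M₂(ℤ)`. -/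
lemma conj_unip (H : Subgroup PSL2R) (hcomm : Subgroup.Commensurable H PSL2Z) (B : SL2R)
    (hB : (QuotientGroup.mk B : PSL2R) ∈ H) (W : Matrix.SpecialLinearGroup (Fin 2) ℤ)
    (Nz : Matrix (Fin 2) (Fin 2) ℤ) (hN : Nz * Nz = 0)
    (hW : (W : Matrix (Fin 2) (Fin 2) ℤ) = 1 + Nz) :
    ∃ (k : ℕ) (r : ℝ) (V : Matrix.SpecialLinearGroup (Fin 2) ℤ), 0 < k ∧ (r = 1 ∨ r = -1) ∧
      (B : Matrix (Fin 2) (Fin 2) ℝ) * ((1 : Matrix (Fin 2) (Fin 2) ℝ) +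
          (k : ℝ) • (Nz.map ((↑) : ℤ → ℝ))) * ((B⁻¹ : SL2R) : Matrix (Fin 2) (Fin 2) ℝ) =
        r • ((V : Matrix (Fin 2) (Fin 2) ℤ).map ((↑) : ℤ → ℝ)) := by
  set mW := Matrix.SpecialLinearGroup.map (Int.castRingHom ℝ) W with hmW
  have hu : (QuotientGroup.mk mW : PSL2R) ∈ PSL2Z := ⟨W, rfl⟩
  obtain ⟨k, hk, hmem⟩ := conj_pow_mem H hcomm hB hu
  have hrw : (QuotientGroup.mk B : PSL2R) * (QuotientGroup.mk mW : PSL2R) ^ k *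
      (QuotientGroup.mk B : PSL2R)⁻¹ = QuotientGroup.mk (B * mW ^ k * B⁻¹) := by
    simp [QuotientGroup.mk_mul, QuotientGroup.mk_pow, QuotientGroup.mk_inv]
  rw [hrw] at hmem
  obtain ⟨V, hV⟩ := hmem
  simp only [MonoidHom.comp_apply, QuotientGroup.mk'_apply] at hV
  obtain ⟨r, hr, heq⟩ := rep_pm hV.symm
  refine ⟨k, r, V, hk, hr, ?_⟩
  have hcoe : ((B * mW ^ k * B⁻¹ : SL2R) : Matrix (Fin 2) (Fin 2) ℝ) =
      (B : Matrix (Fin 2) (Fin 2) ℝ) * ((mW ^ k : SL2R) : Matrix (Fin 2) (Fin 2) ℝ) *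
        ((B⁻¹ : SL2R) : Matrix (Fin 2) (Fin 2) ℝ) := by
    simp [Matrix.SpecialLinearGroup.coe_mul]
  have hWk : ((mW ^ k : SL2R) : Matrix (Fin 2) (Fin 2) ℝ) =
      (1 : Matrix (Fin 2) (Fin 2) ℝ) + (k : ℝ) • (Nz.map ((↑) : ℤ → ℝ)) := by
    have h1 : mW ^ k = Matrix.SpecialLinearGroup.map (Int.castRingHom ℝ) (W ^ k) := by
      rw [hmW, map_pow]
    have h2 : ((W ^ k : Matrix.SpecialLinearGroup (Fin 2) ℤ) : Matrix (Fin 2) (Fin 2) ℤ)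
        = 1 + k • Nz := by
      rw [Matrix.SpecialLinearGroup.coe_pow, hW, unip_pow _ hN]
    rw [h1, Matrix.SpecialLinearGroup.map_apply_coe, RingHom.mapMatrix_apply, h2]
    ext i j
    simp only [Matrix.map_apply, Matrix.add_apply, Matrix.smul_apply, Matrix.one_apply]
    split <;> simp [Int.coe_castRingHom, nsmul_eq_mul]
  rw [hcoe, hWk] at heq
  exact heq

/-- Assembling: if all products of the entries with a fixed nonzero entry `e` are
rational, the matrix is a positive multiple of a rational matrix of positive determinant. -/
lemma assemble (a b c d e : ℝ) (he : e ≠ 0) (hdet : a * d - b * c = 1)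
    (h1 : a * e ∈ QF) (h2 : b * e ∈ QF) (h3 : c * e ∈ QF) (h4 : d * e ∈ QF)
    (h5 : e * e ∈ QF) :
    ∃ (A : Matrix (Fin 2) (Fin 2) ℚ) (t : ℝ), 0 < A.det ∧ 0 < t ∧
      !![a, b; c, d] = t • A.map ((↑) : ℚ → ℝ) := by
  obtain ⟨qa, hqa⟩ := h1
  obtain ⟨qb, hqb⟩ := h2
  obtain ⟨qc, hqc⟩ := h3
  obtain ⟨qd, hqd⟩ := h4
  obtain ⟨qe, hqe⟩ := h5
  have hqa' : ((qa : ℝ)) = a * e := hqa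
  have hqb' : ((qb : ℝ)) = b * e := hqb
  have hqc' : ((qc : ℝ)) = c * e := hqc
  have hqd' : ((qd : ℝ)) = d * e := hqd
  have hqe' : ((qe : ℝ)) = e * e := hqe
  have hee : (0 : ℝ) < e * e := mul_self_pos.mpr he
  have hqe0 : (0 : ℝ) < (qe : ℝ) := by rw [hqe']; exact hee
  have hqeQ : 0 < qe := by exact_mod_cast hqe0
  have hqene : (qe : ℝ) ≠ 0 := ne_of_gt hqe0
  set A₀ : Matrix (Fin 2) (Fin 2) ℚ := !![qa / qe, qb / qe; qc / qe, qd / qe] with hA₀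
  have hent : ∀ (x : ℝ) (qx : ℚ), ((qx : ℝ)) = x * e → e * ((qx / qe : ℚ) : ℝ) = x := by
    intro x qx hx
    push_cast
    rw [hx, hqe']
    field_simp
  have hmap : !![a, b; c, d] = e • A₀.map ((↑) : ℚ → ℝ) := by
    ext i j
    fin_cases i <;> fin_cases j <;>
      simp only [hA₀, Matrix.map_apply, Matrix.smul_apply, Matrix.cons_val', Matrix.cons_val_zero,
        Matrix.cons_val_one, Matrix.head_cons, Matrix.head_fin_const, Matrix.empty_val',
        Matrix.cons_val_fin_one, smul_eq_mul]
    · exact (hent a qa hqa').symm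
    · exact (hent b qb hqb').symm
    · exact (hent c qc hqc').symm
    · exact (hent d qd hqd').symm
  have hdetA₀ : A₀.det = (qa * qd - qb * qc) / (qe * qe) := by
    rw [hA₀, Matrix.det_fin_two_of]
    field_simp
  have hdetval : ((A₀.det : ℚ) : ℝ) = 1 / (e * e) := by
    rw [hdetA₀]
    push_cast
    rw [hqa', hqb', hqc', hqd', hqe']
    field_simp
    linear_combination hdet
  have hdetpos : 0 < A₀.det := by
    have : (0 : ℝ) < ((A₀.det : ℚ) : ℝ) := by rw [hdetval]; positivity
    exact_mod_cast this
  rcases lt_or_gt_of_ne he with hneg | hpos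
  · refine ⟨-A₀, -e, ?_, by linarith, ?_⟩
    · rw [Matrix.det_neg]
      simpa using hdetpos
    · rw [hmap]
      ext i j
      simp only [Matrix.smul_apply, Matrix.map_apply, Matrix.neg_apply, smul_eq_mul]
      push_cast
      ring
  · exact ⟨A₀, e, hdetpos, hpos, hmap⟩

end Stmt15Aux

/-- If `H ≤ PSL_2(ℝ)` is commensurable with `PSL_2(ℤ)`, then every element
of `H` can be represented by a rational `2 × 2` matrix with positive determinant (up to a
positive real scalar making the determinant `1`). -/
theorem stmt15 (H : Subgroup PSL2R) (hcomm : Subgroup.Commensurable H PSL2Z) :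
    ∀ x ∈ H, ∃ (B : SL2R) (A : Matrix (Fin 2) (Fin 2) ℚ) (c : ℝ),
      (QuotientGroup.mk B : PSL2R) = x ∧ 0 < A.det ∧ 0 < c ∧
        (B : Matrix (Fin 2) (Fin 2) ℝ) = c • A.map ((↑) : ℚ → ℝ) := by
  intro x hx
  obtain ⟨B, rfl⟩ := QuotientGroup.mk_surjective x
  set a : ℝ := (B : Matrix (Fin 2) (Fin 2) ℝ) 0 0 with ha
  set b : ℝ := (B : Matrix (Fin 2) (Fin 2) ℝ) 0 1 with hb
  set c : ℝ := (B : Matrix (Fin 2) (Fin 2) ℝ) 1 0 with hc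
  set d : ℝ := (B : Matrix (Fin 2) (Fin 2) ℝ) 1 1 with hd
  have hBco : (B : Matrix (Fin 2) (Fin 2) ℝ) = !![a, b; c, d] := Matrix.eta_fin_two _
  have hdet : a * d - b * c = 1 := by
    have hp := B.property
    rw [Matrix.det_fin_two] at hp
    exact hp
  have hBinv : ((B⁻¹ : SL2R) : Matrix (Fin 2) (Fin 2) ℝ) = !![d, -b; -c, a] := by
    rw [Matrix.SpecialLinearGroup.coe_inv, hBco, Matrix.adjugate_fin_two_of]
  -- the three integral unipotents
  -- case 1 : N = E₀₁
  obtain ⟨k1, r1, V1, hk1, hr1, hEq1⟩ := conj_unip H hcomm B hx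
    ⟨!![1, 1; 0, 1], by norm_num [Matrix.det_fin_two_of]⟩ !![0, 1; 0, 0]
    (by ext i j; fin_cases i <;> fin_cases j <;> simp [Matrix.mul_apply, Fin.sum_univ_two])
    (by ext i j; fin_cases i <;> fin_cases j <;> simp)
  -- case 2 : N = E₁₀
  obtain ⟨k2, r2, V2, hk2, hr2, hEq2⟩ := conj_unip H hcomm B hx
    ⟨!![1, 0; 1, 1], by norm_num [Matrix.det_fin_two_of]⟩ !![0, 0; 1, 0]
    (by ext i j; fin_cases i <;> fin_cases j <;> simp [Matrix.mul_apply, Fin.sum_univ_two])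
    (by ext i j; fin_cases i <;> fin_cases j <;> simp)
  -- case 3 : N = [[1,-1],[1,-1]]
  obtain ⟨k3, r3, V3, hk3, hr3, hEq3⟩ := conj_unip H hcomm B hx
    ⟨!![2, -1; 1, 0], by norm_num [Matrix.det_fin_two_of]⟩ !![1, -1; 1, -1]
    (by ext i j; fin_cases i <;> fin_cases j <;> simp [Matrix.mul_apply, Fin.sum_univ_two])
    (by ext i j; fin_cases i <;> fin_cases j <;> simp [Matrix.one_apply])
  rw [hBco, hBinv] at hEq1 hEq2 hEq3
  have hU1 : (1 : Matrix (Fin 2) (Fin 2) ℝ) +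
      (k1 : ℝ) • ((!![0, 1; 0, 0] : Matrix (Fin 2) (Fin 2) ℤ).map ((↑) : ℤ → ℝ)) =
      !![1, (k1 : ℝ); 0, 1] := by
    ext i j
    fin_cases i <;> fin_cases j <;>
      simp [Matrix.add_apply, Matrix.smul_apply, Matrix.map_apply, Matrix.one_apply]
  have hU2 : (1 : Matrix (Fin 2) (Fin 2) ℝ) +
      (k2 : ℝ) • ((!![0, 0; 1, 0] : Matrix (Fin 2) (Fin 2) ℤ).map ((↑) : ℤ → ℝ)) =
      !![1, 0; (k2 : ℝ), 1] := by
    ext i j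
    fin_cases i <;> fin_cases j <;>
      simp [Matrix.add_apply, Matrix.smul_apply, Matrix.map_apply, Matrix.one_apply]
  have hU3 : (1 : Matrix (Fin 2) (Fin 2) ℝ) +
      (k3 : ℝ) • ((!![1, -1; 1, -1] : Matrix (Fin 2) (Fin 2) ℤ).map ((↑) : ℤ → ℝ)) =
      !![1 + (k3 : ℝ), -(k3 : ℝ); (k3 : ℝ), 1 - (k3 : ℝ)] := by
    ext i j
    fin_cases i <;> fin_cases j <;>
        simp [Matrix.add_apply, Matrix.smul_apply, Matrix.map_apply, Matrix.one_apply] <;>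
      ring
  rw [hU1, Matrix.mul_fin_two, Matrix.mul_fin_two] at hEq1
  rw [hU2, Matrix.mul_fin_two, Matrix.mul_fin_two] at hEq2
  rw [hU3, Matrix.mul_fin_two, Matrix.mul_fin_two] at hEq3
  have hr1F : r1 ∈ QF := by
    rcases hr1 with rfl | rfl
    · exact ⟨1, by simp⟩
    · exact ⟨-1, by simp⟩
  have hr2F : r2 ∈ QF := by
    rcases hr2 with rfl | rfl
    · exact ⟨1, by simp⟩
    · exact ⟨-1, by simp⟩
  have hr3F : r3 ∈ QF := by
    rcases hr3 with rfl | rfl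
    · exact ⟨1, by simp⟩
    · exact ⟨-1, by simp⟩
  -- extract entries, case 1
  have e100 := congrFun (congrFun hEq1 0) 0
  have e101 := congrFun (congrFun hEq1 0) 1
  have e110 := congrFun (congrFun hEq1 1) 0
  simp [Matrix.mul_apply, Fin.sum_univ_two, Matrix.smul_apply, Matrix.map_apply,
    Matrix.add_apply, Matrix.one_apply] at e100 e101 e110
  have haa : a * a ∈ QF := by
    refine mem_QF_div_k hk1 (y := r1 * ((V1 : Matrix (Fin 2) (Fin 2) ℤ) 0 1 : ℝ)) ?_
      (QF.mul_mem hr1F (intCast_mem_QF _))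
    linear_combination e101
  have hcc : c * c ∈ QF := by
    refine mem_QF_div_k hk1 (y := -(r1 * ((V1 : Matrix (Fin 2) (Fin 2) ℤ) 1 0 : ℝ))) ?_
      (QF.neg_mem (QF.mul_mem hr1F (intCast_mem_QF _)))
    linear_combination -e110
  have hac : a * c ∈ QF := by
    refine mem_QF_div_k hk1 (y := 1 - r1 * ((V1 : Matrix (Fin 2) (Fin 2) ℤ) 0 0 : ℝ)) ?_
      (QF.sub_mem QF.one_mem (QF.mul_mem hr1F (intCast_mem_QF _)))
    linear_combination hdet - e100
  -- extract entries, case 2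
  have e200 := congrFun (congrFun hEq2 0) 0
  have e201 := congrFun (congrFun hEq2 0) 1
  have e210 := congrFun (congrFun hEq2 1) 0
  simp [Matrix.mul_apply, Fin.sum_univ_two, Matrix.smul_apply, Matrix.map_apply,
    Matrix.add_apply, Matrix.one_apply] at e200 e201 e210
  have hbb : b * b ∈ QF := by
    refine mem_QF_div_k hk2 (y := -(r2 * ((V2 : Matrix (Fin 2) (Fin 2) ℤ) 0 1 : ℝ))) ?_
      (QF.neg_mem (QF.mul_mem hr2F (intCast_mem_QF _)))
    linear_combination -e201
  have hdd : d * d ∈ QF := by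
    refine mem_QF_div_k hk2 (y := r2 * ((V2 : Matrix (Fin 2) (Fin 2) ℤ) 1 0 : ℝ)) ?_
      (QF.mul_mem hr2F (intCast_mem_QF _))
    linear_combination e210
  have hbd : b * d ∈ QF := by
    refine mem_QF_div_k hk2 (y := r2 * ((V2 : Matrix (Fin 2) (Fin 2) ℤ) 0 0 : ℝ) - 1) ?_
      (QF.sub_mem (QF.mul_mem hr2F (intCast_mem_QF _)) QF.one_mem)
    linear_combination e200 - hdet
  -- extract entries, case 3
  have e300 := congrFun (congrFun hEq3 0) 0
  have e301 := congrFun (congrFun hEq3 0) 1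
  have e310 := congrFun (congrFun hEq3 1) 0
  simp [Matrix.mul_apply, Fin.sum_univ_two, Matrix.smul_apply, Matrix.map_apply,
    Matrix.add_apply, Matrix.one_apply] at e300 e301 e310
  have hab2 : (a + b) * (a + b) ∈ QF := by
    refine mem_QF_div_k hk3 (y := -(r3 * ((V3 : Matrix (Fin 2) (Fin 2) ℤ) 0 1 : ℝ))) ?_
      (QF.neg_mem (QF.mul_mem hr3F (intCast_mem_QF _)))
    linear_combination -e301
  have hcd2 : (c + d) * (c + d) ∈ QF := by
    refine mem_QF_div_k hk3 (y := r3 * ((V3 : Matrix (Fin 2) (Fin 2) ℤ) 1 0 : ℝ)) ?_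
      (QF.mul_mem hr3F (intCast_mem_QF _))
    linear_combination e310
  have habcd : (a + b) * (c + d) ∈ QF := by
    refine mem_QF_div_k hk3 (y := r3 * ((V3 : Matrix (Fin 2) (Fin 2) ℤ) 0 0 : ℝ) - 1) ?_
      (QF.sub_mem (QF.mul_mem hr3F (intCast_mem_QF _)) QF.one_mem)
    linear_combination e300 - hdet
  -- derived products
  have h2QF : (2 : ℝ) ∈ QF := ⟨2, by norm_num⟩
  have hab : a * b ∈ QF := by
    have h : a * b = ((a + b) * (a + b) - a * a - b * b) / 2 := by ring
    rw [h]
    exact QF.div_mem (QF.sub_mem (QF.sub_mem hab2 haa) hbb) h2QF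
  have hcd : c * d ∈ QF := by
    have h : c * d = ((c + d) * (c + d) - c * c - d * d) / 2 := by ring
    rw [h]
    exact QF.div_mem (QF.sub_mem (QF.sub_mem hcd2 hcc) hdd) h2QF
  have had : a * d ∈ QF := by
    have h : a * d = ((a + b) * (c + d) - a * c - b * d + 1) / 2 := by
      linear_combination hdet / 2
    rw [h]
    exact QF.div_mem (QF.add_mem (QF.sub_mem (QF.sub_mem habcd hac) hbd) QF.one_mem) h2QF
  have hbc : b * c ∈ QF := by
    have h : b * c = ((a + b) * (c + d) - a * c - b * d - 1) / 2 := by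
      linear_combination -hdet / 2
    rw [h]
    exact QF.div_mem (QF.sub_mem (QF.sub_mem (QF.sub_mem habcd hac) hbd) QF.one_mem) h2QF
  -- assemble
  have main : ∃ (A : Matrix (Fin 2) (Fin 2) ℚ) (t : ℝ), 0 < A.det ∧ 0 < t ∧
      !![a, b; c, d] = t • A.map ((↑) : ℚ → ℝ) := by
    by_cases hA : a = 0
    · have hbne : b ≠ 0 := by
        intro hb0
        rw [hA, hb0] at hdet
        norm_num at hdet
      exact assemble a b c d b hbne hdet hab hbb (by rwa [mul_comm] at hbc)
        (by rwa [mul_comm] at hbd) hbb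
    · exact assemble a b c d a hA hdet haa (by rwa [mul_comm] at hab)
        (by rwa [mul_comm] at hac) (by rwa [mul_comm] at had) haa
  obtain ⟨A, t, hdA, ht, hmt⟩ := main
  exact ⟨B, A, t, rfl, hdA, ht, by rw [hBco, hmt]⟩
end
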